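/- Let a₁, a₂, b₁, b₂, d₁ be strictly positive reals with a₁ > d₁ and a₁b₁ − 2b₂d₁ > 0, and let l, m be reals. Define R₂ = a₁b₁(a₁²b₁(a₁−d₁)m − 4a₂b₂d₁²(l+m))/(a₂b₂d₁(5b₁a₁³ − 5b₁d₁a₁² − 24a₂b₂d₁²)) and W₂ = (24a₂b₂d₁²l − a₁²b₁(a₁−d₁)m)/(a₂b₂(a₁−d₁)²d₁(2b₂d₁−a₁b₁)(−5b₁a₁³ + 5b₁d₁a₁² + 24a₂b₂d₁²)). If R₂ > 0 and W₂ > 0 (and the denominators above are nonzero), then both pairs (r₂, w₂) and (r₂, −w₂), with r₂ = (a₁b₁/d₁)√R₂ and w₂ = (a₁²b₁²/√2)√W₂, satisfy F₂₀₁ = 0 and F₂₀₂ = 0. -/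

import Mathlib

/-- If `R₂ > 0` and `W₂ > 0`, then both `(r₂, w₂)` and `(r₂, −w₂)` are common zeros of
the second-order averaged functions `F₂₀₁` and `F₂₀₂`. -/
theorem stmt_14 (a₁ a₂ b₁ b₂ d₁ l m : ℝ)
    (ha₁ : 0 < a₁) (ha₂ : 0 < a₂) (hb₁ : 0 < b₁) (hb₂ : 0 < b₂) (hd₁ : 0 < d₁)
    (hne : d₁ < a₁) (hpos : 0 < a₁ * b₁ - 2 * b₂ * d₁)
    (Q : ℝ) (hQ : Q = Real.sqrt (a₁ * b₁ / ((a₁ - d₁) ^ 2 * (a₁ * b₁ - 2 * b₂ * d₁))))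
    (F₂₀₁ F₂₀₂ : ℝ → ℝ → ℝ)
    (hF₂₀₁ : ∀ r w, F₂₀₁ r w = Q * r / (2 * Real.sqrt 2 * a₁ ^ 4 * b₁ ^ 4 * d₁) *
        (2 * (a₁ - d₁) ^ 2 * (a₁ * b₁ - 2 * b₂ * d₁) *
            (b₁ * a₁ ^ 3 - b₁ * d₁ * a₁ ^ 2 - 4 * a₂ * b₂ * d₁ ^ 2) * w ^ 2 -
          a₁ ^ 3 * b₁ ^ 2 * d₁ * (4 * a₁ * l * b₁ ^ 2 + d₁ * (d₁ - a₁) * r ^ 2)))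
    (hF₂₀₂ : ∀ r w, F₂₀₂ r w = -(Real.sqrt 2 / (a₁ ^ 5 * b₁ ^ 5)) * (a₁ - d₁) ^ 2 *
        (a₁ * b₁ - 2 * b₂ * d₁) * Q ^ 3 * w *
        (a₁ ^ 4 * m * b₁ ^ 4 - 6 * a₁ * a₂ * b₂ * d₁ ^ 3 * r ^ 2 * b₁ -
          2 * a₂ * b₂ * (a₁ - d₁) ^ 2 * d₁ * (a₁ * b₁ - 2 * b₂ * d₁) * w ^ 2))
    (R₂ W₂ : ℝ)
    (hR₂ : R₂ = a₁ * b₁ * (a₁ ^ 2 * b₁ * (a₁ - d₁) * m - 4 * a₂ * b₂ * d₁ ^ 2 * (l + m)) /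
        (a₂ * b₂ * d₁ * (5 * b₁ * a₁ ^ 3 - 5 * b₁ * d₁ * a₁ ^ 2 - 24 * a₂ * b₂ * d₁ ^ 2)))
    (hW₂ : W₂ = (24 * a₂ * b₂ * d₁ ^ 2 * l - a₁ ^ 2 * b₁ * (a₁ - d₁) * m) /
        (a₂ * b₂ * (a₁ - d₁) ^ 2 * d₁ * (2 * b₂ * d₁ - a₁ * b₁) *
          (-(5 * b₁ * a₁ ^ 3) + 5 * b₁ * d₁ * a₁ ^ 2 + 24 * a₂ * b₂ * d₁ ^ 2)))
    (hR₂pos : 0 < R₂) (hW₂pos : 0 < W₂)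
    (hden₁ : a₂ * b₂ * d₁ * (5 * b₁ * a₁ ^ 3 - 5 * b₁ * d₁ * a₁ ^ 2 - 24 * a₂ * b₂ * d₁ ^ 2) ≠ 0)
    (hden₂ : a₂ * b₂ * (a₁ - d₁) ^ 2 * d₁ * (2 * b₂ * d₁ - a₁ * b₁) *
        (-(5 * b₁ * a₁ ^ 3) + 5 * b₁ * d₁ * a₁ ^ 2 + 24 * a₂ * b₂ * d₁ ^ 2) ≠ 0)
    (r₂ w₂ : ℝ) (hr₂ : r₂ = a₁ * b₁ / d₁ * Real.sqrt R₂)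
    (hw₂ : w₂ = a₁ ^ 2 * b₁ ^ 2 / Real.sqrt 2 * Real.sqrt W₂) :
    (F₂₀₁ r₂ w₂ = 0 ∧ F₂₀₂ r₂ w₂ = 0) ∧ (F₂₀₁ r₂ (-w₂) = 0 ∧ F₂₀₂ r₂ (-w₂) = 0) := by
  have hd : d₁ ≠ 0 := hd₁.ne'
  have hs2 : Real.sqrt 2 ≠ 0 := by positivity
  have hf1 := right_ne_zero_of_mul hden₁
  have hf2 := right_ne_zero_of_mul hden₂
  have hf3 : a₁ - d₁ ≠ 0 := sub_ne_zero.mpr hne.ne'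
  have hf4 : 2 * b₂ * d₁ - a₁ * b₁ ≠ 0 := (by linarith : 2 * b₂ * d₁ - a₁ * b₁ < 0).ne
  have hf5 : a₁ ≠ 0 := ha₁.ne'
  have hf6 : a₂ ≠ 0 := ha₂.ne'
  have hf7 : b₁ ≠ 0 := hb₁.ne'
  have hf8 : b₂ ≠ 0 := hb₂.ne'
  have hf9 : a₁ ^ 2 * b₁ * 5 * (-a₁ + d₁) + d₁ ^ 2 * b₂ * a₂ * 24 ≠ 0 := by
    intro h; apply hf2; linear_combination h
  have hf10 : a₁ ^ 2 * (a₁ - d₁) * b₁ * 5 - d₁ ^ 2 * b₂ * a₂ * 24 ≠ 0 := by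
    intro h; apply hf2; linear_combination -h
  have hf11 : 2 * d₁ * b₂ - a₁ * b₁ ≠ 0 := by
    intro h; apply hf4; linear_combination h
  have hf12 : a₁ * b₁ - 2 * d₁ * b₂ ≠ 0 := by
    intro h; apply hf4; linear_combination -h
  have hf13 : a₁ ^ 2 * b₁ * (a₁ - d₁) * 5 - a₂ * b₂ * d₁ ^ 2 * 24 ≠ 0 := by
    intro h; apply hf2; linear_combination -h
  have hf14 : b₂ * d₁ * 2 - a₁ * b₁ ≠ 0 := by
    intro h; apply hf4; linear_combination h
  have hf15 : a₁ ^ 2 * b₁ * 5 * (-a₁ + d₁) + a₂ * b₂ * d₁ ^ 2 * 24 ≠ 0 := by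
    intro h; apply hf2; linear_combination h
  have hr2sq : r₂ ^ 2 = (a₁ * b₁ / d₁) ^ 2 * R₂ := by
    rw [hr₂, mul_pow, Real.sq_sqrt hR₂pos.le]
  have hw2sq : w₂ ^ 2 = a₁ ^ 4 * b₁ ^ 4 / 2 * W₂ := by
    rw [hw₂, mul_pow, Real.sq_sqrt hW₂pos.le, div_pow, Real.sq_sqrt (by norm_num : (2:ℝ) ≥ 0)]
    ring
  have key1 : 2 * (a₁ - d₁) ^ 2 * (a₁ * b₁ - 2 * b₂ * d₁) *
      (b₁ * a₁ ^ 3 - b₁ * d₁ * a₁ ^ 2 - 4 * a₂ * b₂ * d₁ ^ 2) * w₂ ^ 2 -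
      a₁ ^ 3 * b₁ ^ 2 * d₁ * (4 * a₁ * l * b₁ ^ 2 + d₁ * (d₁ - a₁) * r₂ ^ 2) = 0 := by
    rw [hr2sq, hw2sq, hR₂, hW₂]
    field_simp
    ring
  have key2 : a₁ ^ 4 * m * b₁ ^ 4 - 6 * a₁ * a₂ * b₂ * d₁ ^ 3 * r₂ ^ 2 * b₁ -
      2 * a₂ * b₂ * (a₁ - d₁) ^ 2 * d₁ * (a₁ * b₁ - 2 * b₂ * d₁) * w₂ ^ 2 = 0 := by
    rw [hr2sq, hw2sq, hR₂, hW₂]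
    field_simp
    ring
  refine ⟨⟨?_, ?_⟩, ?_, ?_⟩
  · rw [hF₂₀₁, key1, mul_zero]
  · rw [hF₂₀₂, key2, mul_zero]
  · rw [hF₂₀₁, neg_sq, key1, mul_zero]
  · rw [hF₂₀₂, neg_sq, key2, mul_zero]
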